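/- arXiv:1707.08038 — 2 statements merged into one kernel-verified Lean document; each statement's English description precedes it below -/
import Mathlib

section
/- Under the hypotheses of the preceding lemma with g(t) = ∫₀¹ d(x)·n(t,x)·p̃(t,x) dx for a continuous positive function d on [0,1], suppose additionally that n(t,x) > 0 for all (t,x) and p̃(T,x) = p⁰ < 0 for all x. Then g(t) < 0 for all t ∈ [0,T], and consequently, for any continuous nonnegative weight w with ∫₀¹ w(x)·n(t,x) dx > 0 for all t, the switching function Φ(t) = ∫₀¹ w(x)·n(t,x)·p̃(t,x) dx is strictly decreasing on [0,T] with Φ(T) < 0. -/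
open Set intervalIntegral

lemma ext01 {f : ℝ → ℝ} (hf : ContinuousOn f (Icc 0 1)) :
    ∃ f' : ℝ → ℝ, Continuous f' ∧ ∀ x ∈ Icc (0:ℝ) 1, f' x = f x := by
  refine ⟨fun x => f (projIcc (0:ℝ) 1 (by norm_num) x),
    hf.comp_continuous (continuous_subtype_val.comp (continuous_projIcc (h := by norm_num)))
      (fun x => Subtype.coe_prop _),
    fun x hx => congrArg f (congrArg Subtype.val (projIcc_of_mem (by norm_num : (0:ℝ) ≤ 1) hx))⟩

lemma icongr01 {f₁ f₂ : ℝ → ℝ} (h : ∀ x ∈ Icc (0:ℝ) 1, f₁ x = f₂ x) :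
    ∫ x in (0:ℝ)..1, f₁ x = ∫ x in (0:ℝ)..1, f₂ x :=
  intervalIntegral.integral_congr (by rwa [uIcc_of_le (by norm_num : (0:ℝ) ≤ 1)])

lemma contparam (K : ℝ → ℝ → ℝ) (hK : Continuous fun q : ℝ × ℝ => K q.1 q.2) :
    Continuous fun t => ∫ x in (0:ℝ)..1, K t x :=
  intervalIntegral.continuous_parametric_intervalIntegral_of_continuous' hK 0 1

lemma derivparam (K K' : ℝ → ℝ → ℝ)
    (hK : Continuous fun q : ℝ × ℝ => K q.1 q.2)
    (hK' : Continuous fun q : ℝ × ℝ => K' q.1 q.2)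
    (t₀ ε : ℝ) (hε : 0 < ε)
    (hdiff : ∀ t ∈ Metric.ball t₀ ε, ∀ x ∈ Icc (0:ℝ) 1, HasDerivAt (fun s => K s x) (K' t x) t) :
    HasDerivAt (fun t => ∫ x in (0:ℝ)..1, K t x) (∫ x in (0:ℝ)..1, K' t₀ x) t₀ := by
  obtain ⟨C, hC⟩ := (((isCompact_closedBall t₀ (ε/2)).prod isCompact_Icc).image_of_continuousOn
    hK'.norm.continuousOn).bddAbove
  have key := intervalIntegral.hasDerivAt_integral_of_dominated_loc_of_deriv_le
    (μ := MeasureTheory.volume) (a := (0:ℝ)) (b := 1) (F := K) (F' := K') (x₀ := t₀)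
    (bound := fun _ => C) (Metric.ball_mem_nhds t₀ (half_pos hε))
    (Filter.Eventually.of_forall fun t =>
      ((hK.comp (Continuous.prodMk_right t)).aestronglyMeasurable))
    ((hK.comp (Continuous.prodMk_right t₀)).intervalIntegrable 0 1)
    ((hK'.comp (Continuous.prodMk_right t₀)).aestronglyMeasurable)
    (Filter.Eventually.of_forall fun x hx t ht => hC
      (mem_image_of_mem _ (Set.mk_mem_prod (Metric.ball_subset_closedBall ht)
        (uIoc_of_le (by norm_num : (0:ℝ) ≤ 1) ▸ hx |> Ioc_subset_Icc_self))))
    (intervalIntegrable_const)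
    (Filter.Eventually.of_forall fun x hx t ht =>
      hdiff t (Metric.ball_subset_ball (by linarith) ht) x
        (Ioc_subset_Icc_self (uIoc_of_le (by norm_num : (0:ℝ) ≤ 1) ▸ hx)))
  exact key.2

/-- With g(t) = ∫₀¹ d n pt dx, n > 0, pt(T,·) = p⁰ < 0, the quantity g is negative on
[0,T] and any weighted switching function with positive weighted mass is strictly
decreasing with negative terminal value. -/
theorem stmt_7 (T : ℝ) (hT : 0 < T)
    (n pt : ℝ → ℝ → ℝ) (F : ℝ → ℝ → ℝ) (d : ℝ → ℝ) (g : ℝ → ℝ)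
    (p0 : ℝ) (hp0 : p0 < 0)
    (hF : Continuous fun q : ℝ × ℝ => F q.1 q.2)
    (hd : ContinuousOn d (Icc 0 1)) (hdpos : ∀ x ∈ Icc (0:ℝ) 1, 0 < d x)
    (hn_cont : Continuous fun q : ℝ × ℝ => n q.1 q.2)
    (hp_cont : Continuous fun q : ℝ × ℝ => pt q.1 q.2)
    (hg : ∀ t, g t = ∫ x in (0:ℝ)..1, d x * n t x * pt t x)
    (hn : ∀ t ∈ Icc (0:ℝ) T, ∀ x ∈ Icc (0:ℝ) 1,
      HasDerivAt (fun s => n s x) (F t x * n t x) t)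
    (hp : ∀ t ∈ Icc (0:ℝ) T, ∀ x ∈ Icc (0:ℝ) 1,
      HasDerivAt (fun s => pt s x) (-(F t x) * pt t x + g t) t)
    (hnpos : ∀ t ∈ Icc (0:ℝ) T, ∀ x ∈ Icc (0:ℝ) 1, 0 < n t x)
    (hpT : ∀ x ∈ Icc (0:ℝ) 1, pt T x = p0)
    (w : ℝ → ℝ) (hw : ContinuousOn w (Icc 0 1))
    (hwnn : ∀ x ∈ Icc (0:ℝ) 1, 0 ≤ w x)
    (hwmass : ∀ t ∈ Icc (0:ℝ) T, 0 < ∫ x in (0:ℝ)..1, w x * n t x)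
    (Φ : ℝ → ℝ) (hΦ : ∀ t, Φ t = ∫ x in (0:ℝ)..1, w x * n t x * pt t x) :
    (∀ t ∈ Icc (0:ℝ) T, g t < 0) ∧ StrictAntiOn Φ (Icc 0 T) ∧ Φ T < 0 := by
  obtain ⟨d', hd'c, hd'eq⟩ := ext01 hd
  obtain ⟨w', hw'c, hw'eq⟩ := ext01 hw
  have hTmem : T ∈ Icc (0:ℝ) T := ⟨hT.le, le_refl T⟩
  have hgfun : g = fun t => ∫ x in (0:ℝ)..1, d' x * n t x * pt t x := by
    funext t; rw [hg t]; exact icongr01 (fun x hx => by rw [hd'eq x hx])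
  have hgc : Continuous g := by
    rw [hgfun]
    exact contparam _ (((hd'c.comp continuous_snd).mul hn_cont).mul hp_cont)
  -- ball inclusion for interior points
  have ballIcc : ∀ t₀ ∈ Ioo (0:ℝ) T, ∀ t ∈ Metric.ball t₀ (min t₀ (T - t₀)), t ∈ Icc (0:ℝ) T := by
    intro t₀ ht₀ t ht
    rw [Metric.mem_ball, Real.dist_eq, abs_lt] at ht
    have h1 := min_le_left t₀ (T - t₀)
    have h2 := min_le_right t₀ (T - t₀)
    exact ⟨by linarith [ht.1], by linarith [ht.2]⟩
  -- main derivative computation, for any continuous weight c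
  have main : ∀ c : ℝ → ℝ, Continuous c → ∀ t₀ ∈ Ioo (0:ℝ) T,
      HasDerivAt (fun t => ∫ x in (0:ℝ)..1, c x * n t x * pt t x)
        ((∫ x in (0:ℝ)..1, c x * n t₀ x) * g t₀) t₀ := by
    intro c hc t₀ ht₀
    have hεpos : 0 < min t₀ (T - t₀) := lt_min ht₀.1 (by linarith [ht₀.2])
    have key := derivparam (fun t x => c x * n t x * pt t x) (fun t x => c x * n t x * g t)
      (((hc.comp continuous_snd).mul hn_cont).mul hp_cont)
      (((hc.comp continuous_snd).mul hn_cont).mul (hgc.comp continuous_fst))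
      t₀ _ hεpos ?_
    · have heq : (∫ x in (0:ℝ)..1, c x * n t₀ x * g t₀)
          = (∫ x in (0:ℝ)..1, c x * n t₀ x) * g t₀ := by
        exact intervalIntegral.integral_mul_const _ _
      rw [← heq]; exact key
    · intro t ht x hx
      have htIcc := ballIcc t₀ ht₀ t ht
      have hd1 : HasDerivAt (fun s => n s x * pt s x)
          (F t x * n t x * pt t x + n t x * (-(F t x) * pt t x + g t)) t := (hn t htIcc x hx).mul (hp t htIcc x hx)
      have hd2 : HasDerivAt (fun s => n s x * pt s x) (n t x * g t) t := by
        convert hd1 using 1; ring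
      have hd3 := hd2.const_mul (c x)
      simpa only [← mul_assoc] using hd3
  -- derivative of g on the interior
  set a : ℝ → ℝ := fun t => ∫ x in (0:ℝ)..1, d' x * n t x with haa
  have hac : Continuous a := contparam _ ((hd'c.comp continuous_snd).mul hn_cont)
  have gderiv : ∀ t₀ ∈ Ioo (0:ℝ) T, HasDerivAt g (a t₀ * g t₀) t₀ := by
    intro t₀ ht₀
    have := main d' hd'c t₀ ht₀
    rw [← hgfun] at this
    exact this
  -- the primitive A of a
  set A : ℝ → ℝ := fun t => ∫ s in (0:ℝ)..t, a s with hAA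
  have hAderiv : ∀ t, HasDerivAt A (a t) t := fun t =>
    intervalIntegral.integral_hasDerivAt_right (hac.intervalIntegrable _ _)
      (hac.stronglyMeasurableAtFilter _ _) hac.continuousAt
  have hAc : Continuous A := continuous_iff_continuousAt.2 fun t => (hAderiv t).continuousAt
  set h : ℝ → ℝ := fun t => g t * Real.exp (-A t) with hhh
  have hhc : Continuous h := hgc.mul (Real.continuous_exp.comp hAc.neg)
  have hderiv : ∀ t ∈ Ioo (0:ℝ) T, HasDerivAt h 0 t := by
    intro t ht
    have hE : HasDerivAt (fun s => Real.exp (-A s)) (Real.exp (-A t) * -(a t)) t :=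
      ((hAderiv t).neg).exp
    have : HasDerivAt (fun s => g s * Real.exp (-A s))
        (a t * g t * Real.exp (-A t) + g t * (Real.exp (-A t) * -a t)) t := (gderiv t ht).mul hE
    convert this using 1; ring
  have hconst : ∀ t ∈ Icc (0:ℝ) T, h t = h T := by
    have hmono : MonotoneOn h (Icc (0:ℝ) T) := by
      apply monotoneOn_of_deriv_nonneg (convex_Icc 0 T) hhc.continuousOn
      · intro x hx
        rw [interior_Icc] at hx
        exact (hderiv x hx).differentiableAt.differentiableWithinAt
      · intro x hx
        rw [interior_Icc] at hx
        exact ((hderiv x hx).deriv).ge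
    have hanti : AntitoneOn h (Icc (0:ℝ) T) := by
      apply antitoneOn_of_deriv_nonpos (convex_Icc 0 T) hhc.continuousOn
      · intro x hx
        rw [interior_Icc] at hx
        exact (hderiv x hx).differentiableAt.differentiableWithinAt
      · intro x hx
        rw [interior_Icc] at hx
        exact ((hderiv x hx).deriv).le
    intro t ht
    exact le_antisymm (hmono ht hTmem ht.2) (hanti ht hTmem ht.2)
  have hgT : g T < 0 := by
    have h1 : g T = (∫ x in (0:ℝ)..1, d' x * n T x) * p0 := by
      rw [hg T, ← intervalIntegral.integral_mul_const]
      exact icongr01 (fun x hx => by rw [hd'eq x hx, hpT x hx])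
    have h2 : 0 < ∫ x in (0:ℝ)..1, d' x * n T x := by
      apply intervalIntegral.intervalIntegral_pos_of_pos_on
      · exact (hd'c.mul (hn_cont.comp (Continuous.prodMk_right T))).intervalIntegrable 0 1
      · intro x hx
        have hx' : x ∈ Icc (0:ℝ) 1 := Ioo_subset_Icc_self hx
        rw [hd'eq x hx']
        exact mul_pos (hdpos x hx') (hnpos T hTmem x hx')
      · norm_num
    rw [h1]; exact mul_neg_of_pos_of_neg h2 hp0
  have claim1 : ∀ t ∈ Icc (0:ℝ) T, g t < 0 := by
    intro t ht
    have h4 : h T < 0 := mul_neg_of_neg_of_pos hgT (Real.exp_pos _)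
    have h5 : g t * Real.exp (-A t) < 0 := lt_of_eq_of_lt (hconst t ht) h4
    nlinarith [Real.exp_pos (-A t)]
  -- Φ part
  have hΦfun : Φ = fun t => ∫ x in (0:ℝ)..1, w' x * n t x * pt t x := by
    funext t; rw [hΦ t]; exact icongr01 (fun x hx => by rw [hw'eq x hx])
  have hΦc : Continuous Φ := by
    rw [hΦfun]
    exact contparam _ (((hw'c.comp continuous_snd).mul hn_cont).mul hp_cont)
  have hwmass' : ∀ t ∈ Icc (0:ℝ) T, 0 < ∫ x in (0:ℝ)..1, w' x * n t x := by
    intro t ht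
    rw [icongr01 (fun x hx => by rw [hw'eq x hx])]
    exact hwmass t ht
  have Φderiv : ∀ t₀ ∈ Ioo (0:ℝ) T,
      HasDerivAt Φ ((∫ x in (0:ℝ)..1, w' x * n t₀ x) * g t₀) t₀ := by
    intro t₀ ht₀
    have := main w' hw'c t₀ ht₀
    rw [← hΦfun] at this
    exact this
  have claim2 : StrictAntiOn Φ (Icc 0 T) := by
    apply strictAntiOn_of_deriv_neg (convex_Icc 0 T) hΦc.continuousOn
    intro x hx
    rw [interior_Icc] at hx
    rw [(Φderiv x hx).deriv]
    exact mul_neg_of_pos_of_neg (hwmass' x ⟨hx.1.le, hx.2.le⟩) (claim1 x ⟨hx.1.le, hx.2.le⟩)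
  have claim3 : Φ T < 0 := by
    have h1 : Φ T = (∫ x in (0:ℝ)..1, w x * n T x) * p0 := by
      rw [hΦ T, ← intervalIntegral.integral_mul_const]
      exact icongr01 (fun x hx => by rw [hpT x hx])
    rw [h1]; exact mul_neg_of_pos_of_neg (hwmass T hTmem) hp0
  exact ⟨claim1, claim2, claim3⟩
end

section
/- Let ρ solve ρ'(t) = (r − d·ρ(t))·ρ(t) − μ·u(t)·ρ(t) on [0,T] with ρ(0) = ρ₀ > 0, constants r, d, μ > 0, and measurable u with 0 ≤ u ≤ u_max. Among all admissible controls with fixed total dose ∫₀ᵀ u(t) dt = D, the terminal value satisfies the explicit lower bound ρ(T) ≥ ρ₀·e^{rT−μD}/(1 + ρ₀·d·(e^{rT} − 1)/r) — in particular ρ(T) > 0, so no dosing schedule with finite total dose D can eradicate the population by time T. -/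
open Set MeasureTheory intervalIntegral

set_option maxHeartbeats 1000000 in
/-- Quantitative non-eradication for the controlled logistic equation: with total dose
∫₀ᵀ u = D, one has ρ(T) ≥ ρ₀ e^{rT−μD}/(1 + ρ₀ d (e^{rT}−1)/r) > 0. -/
theorem stmt_18 (T r d μc u_max D ρ₀ : ℝ)
    (hT : 0 < T) (hr : 0 < r) (hd : 0 < d) (hμc : 0 < μc)
    (hu_max : 0 < u_max) (hρ₀ : 0 < ρ₀)
    (u ρ : ℝ → ℝ) (hu_meas : Measurable u)
    (hu_range : ∀ t ∈ Icc (0:ℝ) T, u t ∈ Icc 0 u_max)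
    (hdose : (∫ t in (0:ℝ)..T, u t) = D)
    (hρ0 : ρ 0 = ρ₀)
    (hode : ∀ t ∈ Icc (0:ℝ) T,
      HasDerivAt ρ ((r - d * ρ t) * ρ t - μc * u t * ρ t) t) :
    ρ T ≥ ρ₀ * Real.exp (r * T - μc * D)
        / (1 + ρ₀ * d * (Real.exp (r * T) - 1) / r) ∧ 0 < ρ T := by
  have hT0 : (0:ℝ) ≤ T := hT.le
  have h0mem : (0:ℝ) ∈ Icc (0:ℝ) T := ⟨le_refl _, hT0⟩
  have hTmem : T ∈ Icc (0:ℝ) T := ⟨hT0, le_refl _⟩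
  have hρcont : ContinuousOn ρ (Icc 0 T) := fun t ht =>
    (hode t ht).continuousAt.continuousWithinAt
  obtain ⟨M, hM⟩ := isCompact_Icc.exists_bound_of_continuousOn hρcont
  set K := |r| + d * M + μc * u_max with hKdef
  have hKbound : ∀ t ∈ Icc (0:ℝ) T,
      |(r - d * ρ t) * ρ t - μc * u t * ρ t| ≤ K * |ρ t| := by
    intro t ht
    have h1 : |(r - d * ρ t) * ρ t - μc * u t * ρ t|
        = |r - d * ρ t - μc * u t| * |ρ t| := by
      rw [← abs_mul]; ring_nf
    rw [h1]
    have hu := hu_range t ht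
    have hMt := hM t ht
    have : |r - d * ρ t - μc * u t| ≤ K := by
      have h2 : |r - d * ρ t - μc * u t| ≤ |r| + |d * ρ t| + |μc * u t| := by
        calc |r - d * ρ t - μc * u t| ≤ |r - d * ρ t| + |μc * u t| := abs_sub _ _
          _ ≤ |r| + |d * ρ t| + |μc * u t| := by
              have := abs_sub r (d * ρ t); linarith
      have h3 : |d * ρ t| ≤ d * M := by
        rw [abs_mul, abs_of_pos hd]
        exact mul_le_mul_of_nonneg_left (by simpa using hMt) hd.le
      have h4 : |μc * u t| ≤ μc * u_max := by
        rw [abs_mul, abs_of_pos hμc]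
        exact mul_le_mul_of_nonneg_left (by rw [abs_of_nonneg hu.1]; exact hu.2) hμc.le
      linarith
    exact mul_le_mul_of_nonneg_right this (abs_nonneg _)
  -- positivity of ρ on [0, T]
  have hpos : ∀ t ∈ Icc (0:ℝ) T, 0 < ρ t := by
    by_contra hcon
    push_neg at hcon
    obtain ⟨t₁, ht₁, ht₁le⟩ := hcon
    have hρ0pos : 0 < ρ 0 := by rw [hρ0]; exact hρ₀
    have hzero : ∃ t₀ ∈ Icc (0:ℝ) T, ρ t₀ = 0 := by
      have hsub : Icc (0:ℝ) t₁ ⊆ Icc 0 T := Icc_subset_Icc le_rfl ht₁.2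
      have hiv := intermediate_value_Icc' (a := (0:ℝ)) (b := t₁) ht₁.1
        (hρcont.mono hsub)
      obtain ⟨t₀, ht₀, hzt⟩ := hiv ⟨ht₁le, hρ0pos.le⟩
      exact ⟨t₀, hsub ht₀, hzt⟩
    obtain ⟨t₀, ht₀, hzt⟩ := hzero
    set g : ℝ → ℝ := fun s => ρ (t₀ - s) with hg
    have hmem : ∀ s ∈ Icc (0:ℝ) t₀, t₀ - s ∈ Icc (0:ℝ) T :=
      fun s hs => ⟨by linarith [hs.2], by linarith [hs.1, ht₀.2]⟩
    have hgc : ContinuousOn g (Icc 0 t₀) :=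
      hρcont.comp (by fun_prop) (fun s hs => hmem s hs)
    have hgd : ∀ s ∈ Ico (0:ℝ) t₀,
        HasDerivWithinAt g
          (((r - d * ρ (t₀ - s)) * ρ (t₀ - s) - μc * u (t₀ - s) * ρ (t₀ - s)) * (0 - 1))
          (Ici s) s := by
      intro s hs
      have hin : HasDerivAt (fun x : ℝ => t₀ - x) (0 - 1) s :=
        (hasDerivAt_const s t₀).sub (hasDerivAt_id s)
      exact ((hode (t₀ - s) (hmem s ⟨hs.1, hs.2.le⟩)).comp s hin).hasDerivWithinAt
    have hbound : ∀ s ∈ Ico (0:ℝ) t₀,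
        ‖((r - d * ρ (t₀ - s)) * ρ (t₀ - s) - μc * u (t₀ - s) * ρ (t₀ - s)) * (0 - 1)‖
          ≤ K * ‖g s‖ + 0 := by
      intro s hs
      have := hKbound (t₀ - s) (hmem s ⟨hs.1, hs.2.le⟩)
      simp only [Real.norm_eq_abs, abs_mul, hg]
      simpa using this
    have hgb := norm_le_gronwallBound_of_norm_deriv_right_le (δ := 0) hgc hgd
      (by simp [hg, hzt]) hbound t₀ ⟨ht₀.1, le_refl _⟩
    rw [gronwallBound_ε0_δ0] at hgb
    have hz0 : ρ 0 = 0 := by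
      simp only [hg, sub_self] at hgb
      exact norm_le_zero_iff.mp hgb
    rw [hρ0] at hz0; exact hρ₀.ne' hz0
  have hρT := hpos T hTmem
  -- the comparison function F
  set F : ℝ → ℝ := fun t => Real.exp (r * t) / ρ t - d * Real.exp (r * t) / r with hF
  have hFd : ∀ t ∈ Icc (0:ℝ) T,
      HasDerivAt F (Real.exp (r * t) * (μc * u t) / ρ t) t := by
    intro t ht
    have hρne : ρ t ≠ 0 := (hpos t ht).ne'
    have he : HasDerivAt (fun x => Real.exp (r * x)) (r * Real.exp (r * t)) t := by
      have := (Real.hasDerivAt_exp (r * t)).comp t ((hasDerivAt_id t).const_mul r)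
      exact this.congr_deriv (by ring)
    have hinv : HasDerivAt (fun x => (ρ x)⁻¹)
        (-((r - d * ρ t) * ρ t - μc * u t * ρ t) / (ρ t)^2) t :=
      (hode t ht).inv hρne
    have h1 : HasDerivAt F
        (r * Real.exp (r * t) * (ρ t)⁻¹ +
          Real.exp (r * t) * (-((r - d * ρ t) * ρ t - μc * u t * ρ t) / (ρ t)^2)
          - d * (r * Real.exp (r * t)) / r) t := by
      have := (he.mul hinv).sub ((he.const_mul d).div_const r)
      simpa [hF, div_eq_mul_inv, mul_comm, mul_assoc, mul_left_comm, Pi.mul_def, Pi.sub_def] using this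
    convert h1 using 1
    field_simp
    ring
  have hFc : ContinuousOn F (Icc 0 T) := fun t ht =>
    (hFd t ht).continuousAt.continuousWithinAt
  have hFmono : MonotoneOn F (Icc 0 T) := by
    apply monotoneOn_of_hasDerivWithinAt_nonneg (convex_Icc 0 T) hFc
    · intro x hx
      rw [interior_Icc] at hx
      exact ((hFd x ⟨hx.1.le, hx.2.le⟩).hasDerivWithinAt)
    · intro x hx
      rw [interior_Icc] at hx
      have hxm : x ∈ Icc (0:ℝ) T := ⟨hx.1.le, hx.2.le⟩
      have hu0 := (hu_range x hxm).1
      have hρx := hpos x hxm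
      have : 0 ≤ Real.exp (r * x) * (μc * u x) :=
        mul_nonneg (Real.exp_pos _).le (mul_nonneg hμc.le hu0)
      exact div_nonneg this hρx.le
  -- the logistic comparison: B t = r + ρ₀ d (e^{rt} - 1)
  set B : ℝ → ℝ := fun t => r + ρ₀ * d * (Real.exp (r * t) - 1) with hBdef
  have hBpos : ∀ t, 0 ≤ t → 0 < B t := by
    intro t ht
    have h1 : (1:ℝ) ≤ Real.exp (r * t) := by
      rw [← Real.exp_zero]
      exact Real.exp_le_exp.mpr (mul_nonneg hr.le ht)
    have h2 : 0 ≤ ρ₀ * d * (Real.exp (r * t) - 1) :=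
      mul_nonneg (mul_nonneg hρ₀.le hd.le) (by linarith)
    simp only [hBdef]; linarith
  -- pointwise comparison ρ t ≤ r ρ₀ e^{rt} / B t
  have hcomp : ∀ t ∈ Icc (0:ℝ) T, ρ t ≤ r * ρ₀ * Real.exp (r * t) / B t := by
    intro t ht
    have h := hFmono h0mem ht ht.1
    have hF0 : F 0 = 1 / ρ₀ - d / r := by
      simp [hF, hρ0]
    rw [hF0] at h
    have hρt := hpos t ht
    have hBt := hBpos t ht.1
    rw [le_div_iff₀ hBt]
    have het := Real.exp_pos (r * t)
    have h' : (1 / ρ₀ - d / r) * (ρ₀ * r * ρ t) ≤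
        (Real.exp (r * t) / ρ t - d * Real.exp (r * t) / r) * (ρ₀ * r * ρ t) := by
      apply mul_le_mul_of_nonneg_right h
      positivity
    have e1 : (1 / ρ₀ - d / r) * (ρ₀ * r * ρ t) = r * ρ t - d * ρ₀ * ρ t := by
      field_simp
    have e2 : (Real.exp (r * t) / ρ t - d * Real.exp (r * t) / r) * (ρ₀ * r * ρ t)
        = ρ₀ * r * Real.exp (r * t) - d * Real.exp (r * t) * ρ₀ * ρ t := by
      field_simp
    rw [e1, e2] at h'
    simp only [hBdef]
    nlinarith
  -- integrability facts
  have hu_int : IntervalIntegrable u volume 0 T := by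
    rw [intervalIntegrable_iff_integrableOn_Icc_of_le hT0]
    apply Measure.integrableOn_of_bounded (M := u_max) measure_Icc_lt_top.ne
      hu_meas.aestronglyMeasurable
    filter_upwards [ae_restrict_mem measurableSet_Icc] with x hx
    have := hu_range x hx
    rw [Real.norm_eq_abs, abs_of_nonneg this.1]
    exact this.2
  have hρ_int : IntervalIntegrable ρ volume 0 T :=
    (hρcont.mono (by rw [uIcc_of_le hT0])).intervalIntegrable
  have hecont : Continuous (fun t : ℝ => Real.exp (r * t)) :=
    Real.continuous_exp.comp (continuous_const.mul continuous_id)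
  have hBcont : Continuous B :=
    continuous_const.add (continuous_const.mul (hecont.sub continuous_const))
  have hψcont : ContinuousOn (fun t => r * ρ₀ * Real.exp (r * t) / B t) (Icc 0 T) := by
    apply ContinuousOn.div ((continuous_const.mul hecont).continuousOn) hBcont.continuousOn
    intro t ht
    exact (hBpos t ht.1).ne'
  have hψ_int : IntervalIntegrable (fun t => r * ρ₀ * Real.exp (r * t) / B t) volume 0 T :=
    (hψcont.mono (by rw [uIcc_of_le hT0])).intervalIntegrable
  -- integral of ψ via explicit antiderivative
  have hGd : ∀ t ∈ Icc (0:ℝ) T,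
      HasDerivAt (fun s => (1 / d) * Real.log (B s)) (r * ρ₀ * Real.exp (r * t) / B t) t := by
    intro t ht
    have hBne := (hBpos t ht.1).ne'
    have hBd : HasDerivAt B (ρ₀ * d * (r * Real.exp (r * t))) t := by
      have he : HasDerivAt (fun x => Real.exp (r * x)) (r * Real.exp (r * t)) t := by
        have := (Real.hasDerivAt_exp (r * t)).comp t ((hasDerivAt_id t).const_mul r)
        exact this.congr_deriv (by ring)
      have := ((he.sub_const 1).const_mul (ρ₀ * d)).const_add r
      simpa [hBdef] using this
    have := (hBd.log hBne).const_mul (1 / d)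
    refine this.congr_deriv ?_
    field_simp
  have hIψ : (∫ t in (0:ℝ)..T, r * ρ₀ * Real.exp (r * t) / B t)
      = (1 / d) * Real.log (B T) - (1 / d) * Real.log r := by
    have := integral_eq_sub_of_hasDerivAt
      (f := fun s => (1 / d) * Real.log (B s))
      (fun t ht => hGd t (by rwa [uIcc_of_le hT0] at ht)) hψ_int
    rw [this]
    have hB0 : B 0 = r := by simp [hBdef]
    simp only [hB0]
  have hIρ : (∫ t in (0:ℝ)..T, ρ t) ≤ (1 / d) * Real.log (B T) - (1 / d) * Real.log r := by
    rw [← hIψ]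
    exact integral_mono_on hT0 hρ_int hψ_int hcomp
  -- log of ρ identity
  have hlogd : ∀ t ∈ Icc (0:ℝ) T,
      HasDerivAt (fun s => Real.log (ρ s)) (r - d * ρ t - μc * u t) t := by
    intro t ht
    have := (hode t ht).log (hpos t ht).ne'
    convert this using 1
    field_simp [(hpos t ht).ne']
  have hint' : IntervalIntegrable (fun t => r - d * ρ t - μc * u t) volume 0 T := by
    exact (intervalIntegrable_const.sub (hρ_int.const_mul d)).sub (hu_int.const_mul μc)
  have hlogeq : (∫ t in (0:ℝ)..T, (r - d * ρ t - μc * u t))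
      = Real.log (ρ T) - Real.log ρ₀ := by
    have := integral_eq_sub_of_hasDerivAt
      (fun t ht => hlogd t (by rwa [uIcc_of_le hT0] at ht)) hint'
    rw [this]
    simp only [hρ0]
  have hsplit : (∫ t in (0:ℝ)..T, (r - d * ρ t - μc * u t))
      = r * T - d * (∫ t in (0:ℝ)..T, ρ t) - μc * D := by
    rw [intervalIntegral.integral_sub (intervalIntegrable_const.sub (hρ_int.const_mul d))
        (hu_int.const_mul μc),
      intervalIntegral.integral_sub intervalIntegrable_const (hρ_int.const_mul d),
      intervalIntegral.integral_const, intervalIntegral.integral_const_mul,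
      intervalIntegral.integral_const_mul, hdose]
    simp [smul_eq_mul]; ring
  -- conclude
  have hlogρT : Real.log (ρ T) = Real.log ρ₀ + r * T - d * (∫ t in (0:ℝ)..T, ρ t) - μc * D := by
    rw [hsplit] at hlogeq; linarith
  have hdI : d * (∫ t in (0:ℝ)..T, ρ t) ≤ Real.log (B T) - Real.log r := by
    have := mul_le_mul_of_nonneg_left hIρ hd.le
    calc d * (∫ t in (0:ℝ)..T, ρ t)
        ≤ d * ((1 / d) * Real.log (B T) - (1 / d) * Real.log r) := this
      _ = Real.log (B T) - Real.log r := by field_simp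
  have hBT := hBpos T hT0
  have hA : 1 + ρ₀ * d * (Real.exp (r * T) - 1) / r = B T / r := by
    simp only [hBdef]; field_simp
  have hApos : 0 < 1 + ρ₀ * d * (Real.exp (r * T) - 1) / r := by
    rw [hA]; positivity
  have hRHSpos : 0 < ρ₀ * Real.exp (r * T - μc * D)
      / (1 + ρ₀ * d * (Real.exp (r * T) - 1) / r) := by positivity
  constructor
  · rw [ge_iff_le, ← Real.log_le_log_iff hRHSpos hρT]
    have hlogRHS : Real.log (ρ₀ * Real.exp (r * T - μc * D)
        / (1 + ρ₀ * d * (Real.exp (r * T) - 1) / r))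
        = Real.log ρ₀ + (r * T - μc * D) - (Real.log (B T) - Real.log r) := by
      rw [hA, Real.log_div (by positivity) (by positivity),
        Real.log_mul hρ₀.ne' (Real.exp_pos _).ne', Real.log_exp,
        Real.log_div hBT.ne' hr.ne']
    rw [hlogRHS, hlogρT]
    linarith
  · exact hρT
end
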